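/- Let (R,m) be a Noetherian local ring and M a finite R-module with depth_m M ≥ 2. Let M' ⊆ M be an m-saturated submodule, i.e., there is no submodule N with M' ⊊ N ⊆ M and mN ⊆ M'. Then depth_m M' ≥ 2. -/

import Mathlib

universe u

/-- `depthGE R J M n` : there is a weakly regular sequence on `M` of length `n` with entries
in `J`.  For a Noetherian local ring `R` and a finite module `M` with `J • M ≠ M` this says
exactly `depth_J M ≥ n` (and the zero module has depth `+∞`, so `depthGE` always holds
for it, matching the usual convention). -/
def depthGE (R : Type u) [CommRing R] (J : Ideal R)
    (M : Type u) [AddCommGroup M] [Module R M] (n : ℕ) : Prop :=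
  ∃ rs : List R, rs.length = n ∧ (∀ r ∈ rs, r ∈ J) ∧
    RingTheory.Sequence.IsWeaklyRegular M rs

open Submodule Pointwise RingTheory.Sequence

section Aux

variable {R : Type*} [CommRing R]

lemma mem_smul_top_iff'' {M : Type*} [AddCommGroup M] [Module R M] (r : R) (u : M) :
    u ∈ r • (⊤ : Submodule R M) ↔ ∃ v : M, r • v = u := by
  constructor
  · rintro ⟨v, -, rfl⟩; exact ⟨v, rfl⟩
  · rintro ⟨v, rfl⟩; exact Submodule.smul_mem_pointwise_smul v r ⊤ trivial

lemma colon_bot_singleton_eq' {M : Type*} [AddCommGroup M] [Module R M] (y : M) :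
    (⊥ : Submodule R M).colon {y} = (R ∙ y).annihilator := by
  ext r
  rw [Submodule.mem_colon_singleton, Submodule.mem_bot, Submodule.mem_annihilator_span_singleton]

/-- An associated prime of `M` is an associated prime of a submodule `S` or of `M ⧸ S`. -/
lemma isAssociatedPrime_submodule_or_quotient [IsNoetherianRing R] {M : Type*} [AddCommGroup M]
    [Module R M] (S : Submodule R M) {p : Ideal R} (hp : IsAssociatedPrime p M) :
    IsAssociatedPrime p S ∨ IsAssociatedPrime p (M ⧸ S) := by
  obtain ⟨hprime, y, hy⟩ := isAssociatedPrime_iff.mp hp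
  rw [colon_bot_singleton_eq'] at hy
  have key : ∀ r : R, r ∈ p ↔ r • y = 0 := fun r => by
    rw [hy, Submodule.mem_annihilator_span_singleton]
  by_cases h : ∀ r : R, r • y ∈ S → r • y = 0
  · right
    refine isAssociatedPrime_iff.mpr ⟨hprime, S.mkQ y, ?_⟩
    rw [colon_bot_singleton_eq']
    ext r
    rw [Submodule.mem_annihilator_span_singleton, ← map_smul, S.mkQ_apply,
      Submodule.Quotient.mk_eq_zero]
    constructor
    · intro hr
      rw [(key r).mp hr]; exact S.zero_mem
    · intro hr
      exact (key r).mpr (h r hr)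
  · left
    push_neg at h
    obtain ⟨r, hrS, hrne⟩ := h
    have hrp : r ∉ p := fun hr => hrne ((key r).mp hr)
    refine isAssociatedPrime_iff.mpr ⟨hprime, ⟨r • y, hrS⟩, ?_⟩
    rw [colon_bot_singleton_eq']
    ext s
    rw [Submodule.mem_annihilator_span_singleton]
    have : s • (⟨r • y, hrS⟩ : S) = ⟨s • (r • y), S.smul_mem s hrS⟩ := rfl
    rw [this, Submodule.mk_eq_zero, smul_smul, ← key (s * r)]
    constructor
    · intro hs; exact p.mul_mem_right r hs
    · intro hs; rcases hprime.mem_or_mem hs with h' | h'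
      · exact h'
      · exact absurd h' hrp

/-- Any associated prime of a cyclic module whose generator has prime annihilator `p` is `p`. -/
lemma isAssociatedPrime_cyclic_eq [IsNoetherianRing R] {M : Type*} [AddCommGroup M] [Module R M]
    {p : Ideal R} (hp : p.IsPrime) (x : M) (hx : p = (R ∙ x).annihilator)
    {q : Ideal R} (hq : IsAssociatedPrime q ((R ∙ x) : Submodule R M)) : q = p := by
  have keyp : ∀ r : R, r ∈ p ↔ r • x = 0 := fun r => by
    rw [hx, Submodule.mem_annihilator_span_singleton]
  obtain ⟨hqprime, w, hw⟩ := isAssociatedPrime_iff.mp hq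
  rw [colon_bot_singleton_eq'] at hw
  obtain ⟨r, hr⟩ := Submodule.mem_span_singleton.mp w.2
  have keyq : ∀ s : R, s ∈ q ↔ s • (w : M) = 0 := fun s => by
    rw [hw, Submodule.mem_annihilator_span_singleton]
    constructor
    · intro h; exact congrArg (Subtype.val) h
    · intro h; exact Subtype.ext h
  have hwne : (w : M) ≠ 0 := by
    intro h0
    have : (1 : R) ∈ q := (keyq 1).mpr (by rw [h0, smul_zero])
    exact hqprime.ne_top (q.eq_top_of_isUnit_mem this isUnit_one)
  have hrp : r ∉ p := by
    intro h
    exact hwne (hr ▸ (keyp r).mp h)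
  ext s
  rw [keyq s, ← hr, smul_smul, ← keyp (s * r)]
  constructor
  · intro hs; rcases hp.mem_or_mem hs with h' | h'
    · exact h'
    · exact absurd h' hrp
  · intro hs; exact p.mul_mem_right r hs

/-- Finiteness of the set of associated primes of a finite module over a Noetherian ring. -/
lemma associatedPrimes_finite (R M : Type*) [CommRing R] [IsNoetherianRing R] [AddCommGroup M]
    [Module R M] [Module.Finite R M] : (associatedPrimes R M).Finite := by
  have main : ∀ N : Submodule R M, (associatedPrimes R (M ⧸ N)).Finite := by
    intro N
    induction N using IsNoetherian.induction with
    | _ N IH =>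
      by_cases hA : associatedPrimes R (M ⧸ N) = ∅
      · rw [hA]; exact Set.finite_empty
      obtain ⟨p, hp⟩ := Set.nonempty_iff_ne_empty.mpr hA
      obtain ⟨hprime, xq, hxq⟩ := isAssociatedPrime_iff.mp hp
      rw [colon_bot_singleton_eq'] at hxq
      obtain ⟨x, rfl⟩ := N.mkQ_surjective xq
      have hxne : N.mkQ x ≠ 0 := by
        intro h
        apply hprime.ne_top
        rw [hxq, h, Submodule.span_singleton_eq_bot.mpr rfl, Submodule.annihilator_bot]
      have hxN : x ∉ N := by
        rwa [Ne, N.mkQ_apply, Submodule.Quotient.mk_eq_zero] at hxne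
      have hlt : N < N ⊔ R ∙ x := by
        refine lt_of_le_of_ne le_sup_left fun h => hxN ?_
        rw [h]
        exact Submodule.mem_sup_right (Submodule.mem_span_singleton_self x)
      have hmap : (N ⊔ R ∙ x).map N.mkQ = (R ∙ N.mkQ x : Submodule R (M ⧸ N)) := by
        rw [Submodule.map_sup, Submodule.map_span, Set.image_singleton]
        have hbot : N.map N.mkQ = ⊥ := by
          rw [eq_bot_iff]
          rintro y ⟨z, hz, rfl⟩
          simp only [N.mkQ_apply, Submodule.mem_bot, Submodule.Quotient.mk_eq_zero]
          exact hz
        rw [hbot, bot_sup_eq, N.mkQ_apply]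
      have key : associatedPrimes R (M ⧸ N)
          ⊆ insert p (associatedPrimes R (M ⧸ (N ⊔ R ∙ x))) := by
        intro q hq
        rcases isAssociatedPrime_submodule_or_quotient (R ∙ N.mkQ x) hq with h | h
        · exact Or.inl (isAssociatedPrime_cyclic_eq hprime _ hxq h)
        · right
          have e : ((M ⧸ N) ⧸ (R ∙ N.mkQ x : Submodule R (M ⧸ N))) ≃ₗ[R]
              M ⧸ (N ⊔ R ∙ x) := by
            rw [← hmap]
            exact Submodule.quotientQuotientEquivQuotient N (N ⊔ R ∙ x) le_sup_left
          exact (LinearEquiv.isAssociatedPrime_iff e).mp h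
      exact ((IH _ hlt).insert p).subset key
  have e := Submodule.quotEquivOfEqBot (⊥ : Submodule R M) rfl
  have := LinearEquiv.AssociatedPrimes.eq (R := R) e
  rw [← this]
  exact main ⊥

/-- Prime avoidance: pick an element of the maximal ideal avoiding a finite set of
primes, none of which is the maximal ideal. -/
lemma exists_mem_maximalIdeal_notMem (R : Type*) [CommRing R] [IsLocalRing R]
    {S : Set (Ideal R)} (hfin : S.Finite) (hprime : ∀ p ∈ S, p.IsPrime)
    (hne : ∀ p ∈ S, p ≠ IsLocalRing.maximalIdeal R) :
    ∃ z ∈ IsLocalRing.maximalIdeal R, ∀ p ∈ S, z ∉ p := by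
  classical
  by_contra h
  push_neg at h
  have hsub : ((IsLocalRing.maximalIdeal R : Ideal R) : Set R)
      ⊆ ⋃ p ∈ hfin.toFinset, (id p : Ideal R) := by
    intro z hz
    obtain ⟨p, hpS, hzp⟩ := h z hz
    exact Set.mem_biUnion (hfin.mem_toFinset.mpr hpS) hzp
  obtain ⟨p, hpS, hle⟩ := (Ideal.subset_union_prime (⊥ : Ideal R) (⊥ : Ideal R)
    (fun p hp _ _ => hprime p (hfin.mem_toFinset.mp hp))).mp hsub
  have hpS' := hfin.mem_toFinset.mp hpS
  have : (id p : Ideal R) = IsLocalRing.maximalIdeal R :=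
    le_antisymm (IsLocalRing.le_maximalIdeal (hprime p hpS').ne_top) hle
  exact hne p hpS' this

lemma regular_of_notMem_ass {R M : Type*} [CommRing R] [IsNoetherianRing R] [AddCommGroup M]
    [Module R M] {z : R} (h : ∀ p ∈ associatedPrimes R M, z ∉ p) : IsSMulRegular M z := by
  apply IsSMulRegular.of_right_eq_zero_of_smul
  intro v hv
  by_contra hv0
  have hz : z ∈ ⋃ p ∈ associatedPrimes R M, (p : Set R) := by
    rw [biUnion_associatedPrimes_eq_zero_divisors]
    exact ⟨v, hv0, hv⟩
  rw [Set.mem_iUnion₂] at hz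
  obtain ⟨p, hp, hzp⟩ := hz
  exact h p hp hzp

/-- The key "swap" lemma: if `x` is regular on `M`, `y` is regular on `M/xM`, and `z` is
regular on `M`, then any `u` with `x • u ∈ zM` and `y • u ∈ zM` lies in `zM`. -/
lemma mem_smul_top_of_smul_mem {M : Type*} [AddCommGroup M] [Module R M] {x y z : R}
    (hx : IsSMulRegular M x) (hy : IsSMulRegular (QuotSMulTop x M) y)
    (hz : IsSMulRegular M z) {u : M} (hxu : x • u ∈ z • (⊤ : Submodule R M))
    (hyu : y • u ∈ z • (⊤ : Submodule R M)) : u ∈ z • (⊤ : Submodule R M) := by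
  obtain ⟨a, ha⟩ := (mem_smul_top_iff'' z _).mp hxu
  obtain ⟨b, hb⟩ := (mem_smul_top_iff'' z _).mp hyu
  have h1 : z • (y • a) = z • (x • b) := by
    rw [smul_comm z y, ha, smul_comm z x, hb, smul_comm x y]
  have h2 : y • a = x • b := hz h1
  have h3 : y • (Submodule.Quotient.mk a : QuotSMulTop x M) = 0 := by
    rw [← Submodule.Quotient.mk_smul, Submodule.Quotient.mk_eq_zero, h2]
    exact Submodule.smul_mem_pointwise_smul b x ⊤ trivial
  have h4 : (Submodule.Quotient.mk a : QuotSMulTop x M) = 0 :=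
    hy (show y • (Submodule.Quotient.mk a : QuotSMulTop x M) = y • 0 by rw [h3, smul_zero])
  obtain ⟨c, hc⟩ := (mem_smul_top_iff'' x a).mp ((Submodule.Quotient.mk_eq_zero _).mp h4)
  refine (mem_smul_top_iff'' z u).mpr ⟨c, ?_⟩
  exact hx (show x • (z • c) = x • u by rw [smul_comm x z, hc, ha])

end Aux

/-- Let `(R,m)` be a Noetherian local ring and `M` a finite `R`-module with `depth_m M ≥ 2`.
Let `M' ⊆ M` be an `m`-saturated submodule (there is no `N` with `M' ⊊ N ⊆ M` and
`m N ⊆ M'`).  Then `depth_m M' ≥ 2`. -/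
theorem depth_two_of_saturated_submodule
    (R : Type u) [CommRing R] [IsNoetherianRing R] [IsLocalRing R]
    (M : Type u) [AddCommGroup M] [Module R M] [Module.Finite R M]
    (hM : depthGE R (IsLocalRing.maximalIdeal R) M 2)
    (M' : Submodule R M)
    (hsat : ∀ N : Submodule R M, M' < N → ¬ (IsLocalRing.maximalIdeal R • N ≤ M')) :
    depthGE R (IsLocalRing.maximalIdeal R) M' 2 := by
  obtain ⟨rs, hlen, hmem, hreg⟩ := hM
  obtain ⟨x, y, rfl⟩ := List.length_eq_two.mp hlen
  rw [RingTheory.Sequence.isWeaklyRegular_cons_iff] at hreg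
  obtain ⟨hx, hreg⟩ := hreg
  rw [RingTheory.Sequence.isWeaklyRegular_cons_iff] at hreg
  obtain ⟨hy, -⟩ := hreg
  have hxm : x ∈ IsLocalRing.maximalIdeal R := hmem x (by simp)
  have hym : y ∈ IsLocalRing.maximalIdeal R := hmem y (by simp)
  set m := IsLocalRing.maximalIdeal R with hm
  -- Step 1: pick z ∈ m regular on M and on M ⧸ M'
  have hfinM : (associatedPrimes R M).Finite := associatedPrimes_finite R M
  have hfinQ : (associatedPrimes R (M ⧸ M')).Finite := associatedPrimes_finite R (M ⧸ M')
  have hS1 : ∀ p ∈ associatedPrimes R M ∪ associatedPrimes R (M ⧸ M'), p.IsPrime :=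
    fun p hp => by rcases hp with h | h <;> exact h.isPrime
  have hS2 : ∀ p ∈ associatedPrimes R M ∪ associatedPrimes R (M ⧸ M'), p ≠ m := by
    rintro p (hp | hp) rfl
    · obtain ⟨hprime, u, hu⟩ := isAssociatedPrime_iff.mp hp
      rw [colon_bot_singleton_eq'] at hu
      have hune : u ≠ 0 := by
        intro h0
        apply hprime.ne_top
        rw [hu, h0, Submodule.span_singleton_eq_bot.mpr rfl, Submodule.annihilator_bot]
      have : x • u = 0 := by
        rw [← Submodule.mem_annihilator_span_singleton, ← hu]; exact hxm
      exact hune (hx (show x • u = x • 0 by rw [this, smul_zero]))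
    · obtain ⟨hprime, uq, hu⟩ := isAssociatedPrime_iff.mp hp
      rw [colon_bot_singleton_eq'] at hu
      obtain ⟨u, rfl⟩ := M'.mkQ_surjective uq
      have hune : M'.mkQ u ≠ 0 := by
        intro h0
        apply hprime.ne_top
        rw [hu, h0, Submodule.span_singleton_eq_bot.mpr rfl, Submodule.annihilator_bot]
      have huM' : u ∉ M' := by
        rwa [Ne, M'.mkQ_apply, Submodule.Quotient.mk_eq_zero] at hune
      refine hsat (M' ⊔ R ∙ u) ?_ ?_
      · refine lt_of_le_of_ne le_sup_left fun h => huM' ?_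
        rw [h]; exact Submodule.mem_sup_right (Submodule.mem_span_singleton_self u)
      · rw [Submodule.smul_sup]
        refine sup_le (Submodule.smul_le.mpr fun r _ n hn => M'.smul_mem r hn) ?_
        refine Submodule.smul_le.mpr fun r hr n hn => ?_
        obtain ⟨s, rfl⟩ := Submodule.mem_span_singleton.mp hn
        rw [smul_comm]
        refine M'.smul_mem s ?_
        have : r • M'.mkQ u = 0 := by
          rw [← Submodule.mem_annihilator_span_singleton, ← hu]; exact hr
        rwa [← map_smul, M'.mkQ_apply, Submodule.Quotient.mk_eq_zero] at this
  obtain ⟨z, hzm, hz⟩ := exists_mem_maximalIdeal_notMem R (hfinM.union hfinQ) hS1 hS2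
  have hzM : IsSMulRegular M z :=
    regular_of_notMem_ass fun p hp => hz p (Or.inl hp)
  have hzQ : IsSMulRegular (M ⧸ M') z :=
    regular_of_notMem_ass fun p hp => hz p (Or.inr hp)
  -- Step 2: pick w ∈ m regular on M ⧸ zM
  have hfin2 : (associatedPrimes R (QuotSMulTop z M)).Finite :=
    associatedPrimes_finite R (QuotSMulTop z M)
  have hT2 : ∀ p ∈ associatedPrimes R (QuotSMulTop z M), p ≠ m := by
    rintro p hp rfl
    obtain ⟨hprime, uq, hu⟩ := isAssociatedPrime_iff.mp hp
    rw [colon_bot_singleton_eq'] at hu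
    obtain ⟨u, rfl⟩ := Submodule.mkQ_surjective (z • ⊤ : Submodule R M) uq
    have hune : (z • ⊤ : Submodule R M).mkQ u ≠ 0 := by
      intro h0
      apply hprime.ne_top
      rw [hu, h0, Submodule.span_singleton_eq_bot.mpr rfl, Submodule.annihilator_bot]
    have hsmul : ∀ r ∈ m, r • u ∈ z • (⊤ : Submodule R M) := by
      intro r hr
      have : r • (z • ⊤ : Submodule R M).mkQ u = 0 := by
        rw [← Submodule.mem_annihilator_span_singleton, ← hu]; exact hr
      rwa [← map_smul, Submodule.mkQ_apply, Submodule.Quotient.mk_eq_zero] at this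
    have : u ∈ z • (⊤ : Submodule R M) :=
      mem_smul_top_of_smul_mem hx hy hzM (hsmul x hxm) (hsmul y hym)
    exact hune (by rwa [Submodule.mkQ_apply, Submodule.Quotient.mk_eq_zero])
  obtain ⟨w, hwm, hw⟩ := exists_mem_maximalIdeal_notMem R hfin2
    (fun p hp => hp.isPrime) hT2
  have hwQ : IsSMulRegular (QuotSMulTop z M) w := regular_of_notMem_ass hw
  -- Step 3: assemble the sequence [z, w] on M'
  refine ⟨[z, w], rfl, ?_, ?_⟩
  · intro r hr
    rcases List.mem_pair.mp hr with rfl | rfl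
    · exact hzm
    · exact hwm
  · refine RingTheory.Sequence.IsWeaklyRegular.cons (hzM.submodule M' z) ?_
    rw [RingTheory.Sequence.isWeaklyRegular_singleton_iff]
    -- The natural map QuotSMulTop z M' →ₗ QuotSMulTop z M is injective
    have hle : (z • ⊤ : Submodule R M') ≤ (z • (⊤ : Submodule R M)).comap M'.subtype := by
      rintro v ⟨v', -, rfl⟩
      exact Submodule.smul_mem_pointwise_smul _ z ⊤ trivial
    set f : QuotSMulTop z M' →ₗ[R] QuotSMulTop z M :=
      Submodule.mapQ _ _ M'.subtype hle with hf
    have hinj : Function.Injective f := by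
      rw [← LinearMap.ker_eq_bot, eq_bot_iff]
      intro uq huq
      obtain ⟨u, rfl⟩ := Submodule.mkQ_surjective _ uq
      rw [LinearMap.mem_ker, hf, Submodule.mkQ_apply, Submodule.mapQ_apply,
        Submodule.Quotient.mk_eq_zero] at huq
      obtain ⟨v, hv⟩ := (mem_smul_top_iff'' z ((u : M))).mp huq
      have hvM' : v ∈ M' := mem_of_isSMulRegular_quotient_of_smul_mem hzQ (by rw [hv]; exact u.2)
      have : u ∈ (z • ⊤ : Submodule R M') := by
        refine (mem_smul_top_iff'' z u).mpr ⟨⟨v, hvM'⟩, ?_⟩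
        exact Subtype.ext hv
      rwa [Submodule.mkQ_apply, Submodule.mem_bot, Submodule.Quotient.mk_eq_zero]
    exact hwQ.of_injective f hinj
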